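/- Suppose ρ : D → ℝ ∪ {−∞} is a fixed point of the upper-concave-envelope operation in each coordinate direction (i.e., for each k, ρ is already concave in the k-th marginal with others fixed) and ρ ≥ ρ_0 pointwise. Define ρ_0^k := ρ_0 and recursively ρ_t^k := (coordinate-(k)-wise concave envelope of ρ_{t−1}^{k⁺}), where k⁺ cycles through {1,…,m}. Then for every t and every k, ρ_t^k ≤ ρ pointwise. -/
import Mathlib


/-- A pmf on a finite alphabet. -/
def IsPmf {γ : Type} [Fintype γ] (q : γ → ℝ) : Prop :=
  (∀ x, 0 ≤ q x) ∧ ∑ x, q x = 1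

/-- The coordinate-`k` upper concave envelope of `g` at the tuple of marginals `p`:
`sup { Σ_i λ_i g(q_i ⊗ p_{-k}) : λ_i ≥ 0, Σ λ_i = 1, q_i pmfs on X_k, Σ λ_i q_i = p_k }`. -/
noncomputable def coordEnv {m : ℕ} (α : Fin m → Type) [∀ j, Fintype (α j)] (k : Fin m)
    (g : (∀ j, α j → ℝ) → EReal) (p : ∀ j, α j → ℝ) : EReal :=
  sSup {y | ∃ (n : ℕ) (lam : Fin n → ℝ) (q : Fin n → (α k → ℝ)),
    (∀ i, 0 ≤ lam i) ∧ (∑ i, lam i = 1) ∧ (∀ i, IsPmf (q i)) ∧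
    (∑ i, lam i • q i) = p k ∧
    y = ∑ i, (lam i : EReal) * g (Function.update p k (q i))}

/-- If `ρ` majorizes `ρ₀` and is a fixed point of the coordinate-wise upper-concave-envelope
operation in every coordinate (i.e. is concave in each marginal with the others fixed), then
every iterate `ρ_t` of the algorithm — starting from `ρ₀` and applying the coordinate-wise
concave envelope along any cycling sequence of coordinates — satisfies `ρ_t ≤ ρ` pointwise
on product pmfs. -/
theorem stmt13 {m : ℕ} (α : Fin m → Type) [∀ j, Fintype (α j)]
    (ρ0 ρ : (∀ j, α j → ℝ) → EReal)
    (hmaj : ∀ p : ∀ j, α j → ℝ, (∀ j, IsPmf (p j)) → ρ0 p ≤ ρ p)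
    (hfix : ∀ (k : Fin m) (p : ∀ j, α j → ℝ), (∀ j, IsPmf (p j)) →
      coordEnv α k ρ p = ρ p)
    (ks : ℕ → Fin m) (seq : ℕ → (∀ j, α j → ℝ) → EReal)
    (h0 : seq 0 = ρ0)
    (hrec : ∀ t p, seq (t + 1) p = coordEnv α (ks t) (seq t) p) :
    ∀ (t : ℕ) (p : ∀ j, α j → ℝ), (∀ j, IsPmf (p j)) → seq t p ≤ ρ p := by
  intro t
  induction t with
  | zero => intro p hp; rw [h0]; exact hmaj p hp
  | succ t ih =>
    intro p hp
    rw [hrec]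
    apply sSup_le
    rintro y ⟨n, lam, q, hlam, hsum, hq, hmix, rfl⟩
    have hple : ∀ i, (∀ j, IsPmf (Function.update p (ks t) (q i) j)) := by
      intro i j
      rcases eq_or_ne j (ks t) with h | h
      · subst h; simpa using hq i
      · simpa [Function.update_of_ne h] using hp j
    calc ∑ i, (lam i : EReal) * seq t (Function.update p (ks t) (q i))
        ≤ ∑ i, (lam i : EReal) * ρ (Function.update p (ks t) (q i)) := by
          apply Finset.sum_le_sum
          intro i _
          exact mul_le_mul_of_nonneg_left (ih _ (hple i))
            (by exact_mod_cast hlam i)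
      _ ≤ coordEnv α (ks t) ρ p := le_sSup ⟨n, lam, q, hlam, hsum, hq, hmix, rfl⟩
      _ = ρ p := hfix (ks t) p hp
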